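/- arXiv:2001.03572 — 3 statements merged into one kernel-verified Lean document; each statement's English description precedes it below -/
import Mathlib

section
/- Let t₀ ≠ t_f be real numbers, let y₀, y_f, v₀, v_f ∈ ℝ, and let g : ℝ → ℝ be differentiable. Define y(t) = g(t) + Ω₁(t)(y₀ − g(t₀)) + Ω₂(t)(y_f − g(t_f)) + Ω₃(t)(v₀ − g′(t₀)) + Ω₄(t)(v_f − g′(t_f)). Then y is differentiable and satisfies the four boundary constraints y(t₀) = y₀, y(t_f) = y_f, y′(t₀) = v₀, and y′(t_f) = v_f. -/
/-- TFC switching function Ω₁ for two-point BVP constraints. -/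
noncomputable def Omega1 (t₀ t_f t : ℝ) : ℝ :=
  1 + 2 * (t - t₀) ^ 3 / (t_f - t₀) ^ 3 - 3 * (t - t₀) ^ 2 / (t_f - t₀) ^ 2

/-- TFC switching function Ω₂ for two-point BVP constraints. -/
noncomputable def Omega2 (t₀ t_f t : ℝ) : ℝ :=
  -(2 * (t - t₀) ^ 3 / (t_f - t₀) ^ 3) + 3 * (t - t₀) ^ 2 / (t_f - t₀) ^ 2

/-- TFC switching function Ω₃ for two-point BVP constraints. -/
noncomputable def Omega3 (t₀ t_f t : ℝ) : ℝ :=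
  (t - t₀) + (t - t₀) ^ 3 / (t_f - t₀) ^ 2 - 2 * (t - t₀) ^ 2 / (t_f - t₀)

/-- TFC switching function Ω₄ for two-point BVP constraints. -/
noncomputable def Omega4 (t₀ t_f t : ℝ) : ℝ :=
  (t - t₀) ^ 3 / (t_f - t₀) ^ 2 - (t - t₀) ^ 2 / (t_f - t₀)

/-- TFC constrained expression for value/first-derivative constraints at t₀ and t_f. -/
noncomputable def constrainedExpr (t₀ t_f y₀ y_f v₀ v_f : ℝ) (g : ℝ → ℝ) : ℝ → ℝ :=
  fun t =>
    g t + Omega1 t₀ t_f t * (y₀ - g t₀) + Omega2 t₀ t_f t * (y_f - g t_f) +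
      Omega3 t₀ t_f t * (v₀ - deriv g t₀) + Omega4 t₀ t_f t * (v_f - deriv g t_f)


lemma omega1_hasDerivAt (t₀ t_f t : ℝ) :
    HasDerivAt (Omega1 t₀ t_f)
      (6 * (t - t₀) ^ 2 / (t_f - t₀) ^ 3 - 6 * (t - t₀) / (t_f - t₀) ^ 2) t := by
  have hs : HasDerivAt (fun x : ℝ => x - t₀) 1 t := (hasDerivAt_id t).sub_const t₀
  have H := ((hasDerivAt_const t (1:ℝ)).add
      (((hs.pow 3).const_mul 2).div_const ((t_f - t₀) ^ 3))).sub
      (((hs.pow 2).const_mul 3).div_const ((t_f - t₀) ^ 2))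
  exact H.congr_deriv (by ring)

lemma omega2_hasDerivAt (t₀ t_f t : ℝ) :
    HasDerivAt (Omega2 t₀ t_f)
      (-(6 * (t - t₀) ^ 2 / (t_f - t₀) ^ 3) + 6 * (t - t₀) / (t_f - t₀) ^ 2) t := by
  have hs : HasDerivAt (fun x : ℝ => x - t₀) 1 t := (hasDerivAt_id t).sub_const t₀
  have H := ((((hs.pow 3).const_mul 2).div_const ((t_f - t₀) ^ 3)).neg).add
      (((hs.pow 2).const_mul 3).div_const ((t_f - t₀) ^ 2))
  exact H.congr_deriv (by ring)

lemma omega3_hasDerivAt (t₀ t_f t : ℝ) :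
    HasDerivAt (Omega3 t₀ t_f)
      (1 + 3 * (t - t₀) ^ 2 / (t_f - t₀) ^ 2 - 4 * (t - t₀) / (t_f - t₀)) t := by
  have hs : HasDerivAt (fun x : ℝ => x - t₀) 1 t := (hasDerivAt_id t).sub_const t₀
  have H := (hs.add ((hs.pow 3).div_const ((t_f - t₀) ^ 2))).sub
      (((hs.pow 2).const_mul 2).div_const (t_f - t₀))
  exact H.congr_deriv (by ring)

lemma omega4_hasDerivAt (t₀ t_f t : ℝ) :
    HasDerivAt (Omega4 t₀ t_f)
      (3 * (t - t₀) ^ 2 / (t_f - t₀) ^ 2 - 2 * (t - t₀) / (t_f - t₀)) t := by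
  have hs : HasDerivAt (fun x : ℝ => x - t₀) 1 t := (hasDerivAt_id t).sub_const t₀
  have H := ((hs.pow 3).div_const ((t_f - t₀) ^ 2)).sub
      ((hs.pow 2).div_const (t_f - t₀))
  exact H.congr_deriv (by ring)

theorem constrainedExpr_satisfies_constraints (t₀ t_f : ℝ) (h : t₀ ≠ t_f)
    (y₀ y_f v₀ v_f : ℝ) (g : ℝ → ℝ) (hg : Differentiable ℝ g) :
    Differentiable ℝ (constrainedExpr t₀ t_f y₀ y_f v₀ v_f g) ∧
    constrainedExpr t₀ t_f y₀ y_f v₀ v_f g t₀ = y₀ ∧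
    constrainedExpr t₀ t_f y₀ y_f v₀ v_f g t_f = y_f ∧
    deriv (constrainedExpr t₀ t_f y₀ y_f v₀ v_f g) t₀ = v₀ ∧
    deriv (constrainedExpr t₀ t_f y₀ y_f v₀ v_f g) t_f = v_f := by
  have hΔ : t_f - t₀ ≠ 0 := sub_ne_zero.mpr (Ne.symm h)
  have key : ∀ t, HasDerivAt (constrainedExpr t₀ t_f y₀ y_f v₀ v_f g)
      (deriv g t
        + (6 * (t - t₀) ^ 2 / (t_f - t₀) ^ 3 - 6 * (t - t₀) / (t_f - t₀) ^ 2) * (y₀ - g t₀)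
        + (-(6 * (t - t₀) ^ 2 / (t_f - t₀) ^ 3) + 6 * (t - t₀) / (t_f - t₀) ^ 2) * (y_f - g t_f)
        + (1 + 3 * (t - t₀) ^ 2 / (t_f - t₀) ^ 2 - 4 * (t - t₀) / (t_f - t₀)) * (v₀ - deriv g t₀)
        + (3 * (t - t₀) ^ 2 / (t_f - t₀) ^ 2 - 2 * (t - t₀) / (t_f - t₀)) * (v_f - deriv g t_f)) t := by
    intro t
    exact (((((hg t).hasDerivAt).add ((omega1_hasDerivAt t₀ t_f t).mul_const _)).add
      ((omega2_hasDerivAt t₀ t_f t).mul_const _)).add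
      ((omega3_hasDerivAt t₀ t_f t).mul_const _)).add
      ((omega4_hasDerivAt t₀ t_f t).mul_const _)
  refine ⟨fun t => ((key t).differentiableAt), ?_, ?_, ?_, ?_⟩
  · simp only [constrainedExpr, Omega1, Omega2, Omega3, Omega4]
    field_simp
    ring
  · simp only [constrainedExpr, Omega1, Omega2, Omega3, Omega4]
    field_simp
    ring
  · rw [(key t₀).deriv]
    field_simp
    ring
  · rw [(key t_f).deriv]
    field_simp
    ring
end

section
/- Let t₀ ≠ t_f be real numbers and y₀, y_f, v₀, v_f ∈ ℝ. The set of constrained expressions obtained as g ranges over all differentiable functions ℝ → ℝ is exactly the set of differentiable functions y : ℝ → ℝ satisfying y(t₀) = y₀, y(t_f) = y_f, y′(t₀) = v₀, y′(t_f) = v_f. In particular, every differentiable y satisfying these four boundary conditions equals the constrained expression obtained by choosing the free function g = y. -/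
lemma cubicHasDeriv (a b c d t₀ t : ℝ) :
    HasDerivAt (fun s => a + b*(s-t₀)^3 + c*(s-t₀)^2 + d*(s-t₀))
      (3*b*(t-t₀)^2 + 2*c*(t-t₀) + d) t := by
  have h : HasDerivAt (fun s : ℝ => s - t₀) 1 t := (hasDerivAt_id t).sub_const _
  have H := ((((h.pow 3).const_mul b).add ((h.pow 2).const_mul c)).add (h.const_mul d)).const_add a
  refine HasDerivAt.congr_of_eventuallyEq (H.congr_deriv ?_) (Filter.Eventually.of_forall fun s => ?_)
  · push_cast; ring
  · simp only [Pi.add_apply, Pi.pow_apply]; ring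

lemma hasDerivAt_Omega1 (t₀ t_f t : ℝ) :
    HasDerivAt (Omega1 t₀ t_f)
      (3*(2/(t_f-t₀)^3)*(t-t₀)^2 + 2*(-3/(t_f-t₀)^2)*(t-t₀) + 0) t := by
  convert cubicHasDeriv 1 (2/(t_f-t₀)^3) (-3/(t_f-t₀)^2) 0 t₀ t using 1
  funext s; unfold Omega1; ring

lemma hasDerivAt_Omega2 (t₀ t_f t : ℝ) :
    HasDerivAt (Omega2 t₀ t_f)
      (3*(-2/(t_f-t₀)^3)*(t-t₀)^2 + 2*(3/(t_f-t₀)^2)*(t-t₀) + 0) t := by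
  convert cubicHasDeriv 0 (-2/(t_f-t₀)^3) (3/(t_f-t₀)^2) 0 t₀ t using 1
  funext s; unfold Omega2; ring

lemma hasDerivAt_Omega3 (t₀ t_f t : ℝ) :
    HasDerivAt (Omega3 t₀ t_f)
      (3*(1/(t_f-t₀)^2)*(t-t₀)^2 + 2*(-2/(t_f-t₀))*(t-t₀) + 1) t := by
  convert cubicHasDeriv 0 (1/(t_f-t₀)^2) (-2/(t_f-t₀)) 1 t₀ t using 1
  funext s; unfold Omega3; ring

lemma hasDerivAt_Omega4 (t₀ t_f t : ℝ) :
    HasDerivAt (Omega4 t₀ t_f)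
      (3*(1/(t_f-t₀)^2)*(t-t₀)^2 + 2*(-1/(t_f-t₀))*(t-t₀) + 0) t := by
  convert cubicHasDeriv 0 (1/(t_f-t₀)^2) (-1/(t_f-t₀)) 0 t₀ t using 1
  funext s; unfold Omega4; ring

theorem constrainedExpr_range_eq_admissible_set (t₀ t_f : ℝ) (h : t₀ ≠ t_f)
    (y₀ y_f v₀ v_f : ℝ) :
    {y : ℝ → ℝ | ∃ g : ℝ → ℝ, Differentiable ℝ g ∧
        y = constrainedExpr t₀ t_f y₀ y_f v₀ v_f g} =
      {y : ℝ → ℝ | Differentiable ℝ y ∧ y t₀ = y₀ ∧ y t_f = y_f ∧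
        deriv y t₀ = v₀ ∧ deriv y t_f = v_f} ∧
    ∀ y : ℝ → ℝ, Differentiable ℝ y → y t₀ = y₀ → y t_f = y_f →
      deriv y t₀ = v₀ → deriv y t_f = v_f →
        y = constrainedExpr t₀ t_f y₀ y_f v₀ v_f y := by
  have hΔ : t_f - t₀ ≠ 0 := sub_ne_zero.mpr (Ne.symm h)
  -- values of switching functions
  have O1t₀ : Omega1 t₀ t_f t₀ = 1 := by unfold Omega1; simp
  have O2t₀ : Omega2 t₀ t_f t₀ = 0 := by unfold Omega2; simp
  have O3t₀ : Omega3 t₀ t_f t₀ = 0 := by unfold Omega3; simp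
  have O4t₀ : Omega4 t₀ t_f t₀ = 0 := by unfold Omega4; simp
  have O1tf : Omega1 t₀ t_f t_f = 0 := by unfold Omega1; field_simp; ring
  have O2tf : Omega2 t₀ t_f t_f = 1 := by unfold Omega2; field_simp; ring
  have O3tf : Omega3 t₀ t_f t_f = 0 := by unfold Omega3; field_simp; ring
  have O4tf : Omega4 t₀ t_f t_f = 0 := by unfold Omega4; field_simp; ring
  -- second part
  have main : ∀ y : ℝ → ℝ, Differentiable ℝ y → y t₀ = y₀ → y t_f = y_f →
      deriv y t₀ = v₀ → deriv y t_f = v_f →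
        y = constrainedExpr t₀ t_f y₀ y_f v₀ v_f y := by
    intro y _ h1 h2 h3 h4
    funext t
    unfold constrainedExpr
    rw [h1, h2, h3, h4]
    simp
  -- derivative of constrained expression for differentiable g
  have key : ∀ (g : ℝ → ℝ), Differentiable ℝ g → ∀ t : ℝ,
      HasDerivAt (constrainedExpr t₀ t_f y₀ y_f v₀ v_f g)
        (deriv g t
          + (3*(2/(t_f-t₀)^3)*(t-t₀)^2 + 2*(-3/(t_f-t₀)^2)*(t-t₀) + 0) * (y₀ - g t₀)
          + (3*(-2/(t_f-t₀)^3)*(t-t₀)^2 + 2*(3/(t_f-t₀)^2)*(t-t₀) + 0) * (y_f - g t_f)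
          + (3*(1/(t_f-t₀)^2)*(t-t₀)^2 + 2*(-2/(t_f-t₀))*(t-t₀) + 1) * (v₀ - deriv g t₀)
          + (3*(1/(t_f-t₀)^2)*(t-t₀)^2 + 2*(-1/(t_f-t₀))*(t-t₀) + 0) * (v_f - deriv g t_f)) t := by
    intro g hg t
    exact (((((hg t).hasDerivAt).add ((hasDerivAt_Omega1 t₀ t_f t).mul_const _)).add
      ((hasDerivAt_Omega2 t₀ t_f t).mul_const _)).add
      ((hasDerivAt_Omega3 t₀ t_f t).mul_const _)).add
      ((hasDerivAt_Omega4 t₀ t_f t).mul_const _)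
  constructor
  · ext y
    simp only [Set.mem_setOf_eq]
    constructor
    · rintro ⟨g, hg, rfl⟩
      refine ⟨fun t => ((key g hg t).differentiableAt), ?_, ?_, ?_, ?_⟩
      · unfold constrainedExpr; rw [O1t₀, O2t₀, O3t₀, O4t₀]; ring
      · unfold constrainedExpr; rw [O1tf, O2tf, O3tf, O4tf]; ring
      · rw [(key g hg t₀).deriv]; field_simp; ring
      · rw [(key g hg t_f).deriv]; field_simp; ring
    · rintro ⟨hd, h1, h2, h3, h4⟩
      exact ⟨y, hd, main y hd h1 h2 h3 h4⟩
  · exact main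
end

section
/- Let λ_r, λ_v, v, a_g ∈ ℝ³ (with the Euclidean inner product and norm), let α > 0, m > 0, λ_m ∈ ℝ, 0 < T_min < T_max, and assume λ_v ≠ 0. Define H(T, u) = αT + ⟨λ_r, v⟩ + ⟨λ_v, a_g + (T/m)u⟩ − λ_m α T for T ∈ [T_min, T_max] and unit vectors u ∈ ℝ³, and set σ = α − ‖λ_v‖/m − αλ_m. If σ < 0, then H attains its minimum over [T_min, T_max] × {u : ‖u‖ = 1} at (T, u) = (T_max, −λ_v/‖λ_v‖); if σ > 0, the minimum is attained at (T, u) = (T_min, −λ_v/‖λ_v‖). -/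
theorem hamiltonian_pointwise_minimum
    (lam_r lam_v v a_g : EuclideanSpace ℝ (Fin 3)) (α m lam_m T_min T_max : ℝ)
    (hα : 0 < α) (hm : 0 < m) (hT : 0 < T_min) (hTT : T_min < T_max)
    (hlv : lam_v ≠ 0) :
    let H : ℝ → EuclideanSpace ℝ (Fin 3) → ℝ := fun T u =>
      α * T + (inner ℝ lam_r v : ℝ) + (inner ℝ lam_v (a_g + (T / m) • u) : ℝ) - lam_m * α * T
    let σ : ℝ := α - ‖lam_v‖ / m - α * lam_m
    let u_opt : EuclideanSpace ℝ (Fin 3) := -(‖lam_v‖⁻¹ • lam_v)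
    ‖u_opt‖ = 1 ∧
    (σ < 0 → ∀ T ∈ Set.Icc T_min T_max, ∀ u : EuclideanSpace ℝ (Fin 3), ‖u‖ = 1 →
      H T_max u_opt ≤ H T u) ∧
    (σ > 0 → ∀ T ∈ Set.Icc T_min T_max, ∀ u : EuclideanSpace ℝ (Fin 3), ‖u‖ = 1 →
      H T_min u_opt ≤ H T u) := by
  intro H σ u_opt
  have hnv : (0:ℝ) < ‖lam_v‖ := norm_pos_iff.mpr hlv
  have hunorm : ‖u_opt‖ = 1 := by
    simp [u_opt, norm_smul, abs_of_pos (inv_pos.mpr hnv), inv_mul_cancel₀ hnv.ne']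
  have hinner_opt : (inner ℝ lam_v u_opt : ℝ) = -‖lam_v‖ := by
    simp only [u_opt, inner_neg_right, real_inner_smul_right,
      real_inner_self_eq_norm_sq]
    field_simp
  have hH : ∀ T u, H T u = (α - lam_m * α) * T + (inner ℝ lam_r v : ℝ)
      + (inner ℝ lam_v a_g : ℝ) + (T / m) * (inner ℝ lam_v u : ℝ) := by
    intro T u
    simp only [H, inner_add_right, real_inner_smul_right]
    ring
  have hHopt : ∀ T, H T u_opt = σ * T + ((inner ℝ lam_r v : ℝ) + (inner ℝ lam_v a_g : ℝ)) := by
    intro T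
    rw [hH, hinner_opt]
    simp only [σ]
    field_simp
    ring
  have key : ∀ T, 0 < T → ∀ u : EuclideanSpace ℝ (Fin 3), ‖u‖ = 1 →
      H T u_opt ≤ H T u := by
    intro T hTpos u hu
    rw [hH, hH, hinner_opt]
    have hcs : -‖lam_v‖ ≤ (inner ℝ lam_v u : ℝ) := by
      have := abs_real_inner_le_norm lam_v u
      rw [hu, mul_one] at this
      linarith [neg_abs_le (inner ℝ lam_v u : ℝ)]
    have hTm : 0 < T / m := div_pos hTpos hm
    nlinarith
  refine ⟨hunorm, ?_, ?_⟩
  · intro hσ T hTmem u hu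
    have h1 : H T_max u_opt ≤ H T u_opt := by
      rw [hHopt, hHopt]
      nlinarith [hTmem.2]
    exact h1.trans (key T (hT.trans_le hTmem.1) u hu)
  · intro hσ T hTmem u hu
    have h1 : H T_min u_opt ≤ H T u_opt := by
      rw [hHopt, hHopt]
      nlinarith [hTmem.1]
    exact h1.trans (key T (hT.trans_le hTmem.1) u hu)
end
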